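/- Under the Aubin–Nitsche setting: let $s \in \mathbb{C}$, $\rho = \Re s > 0$, let $\hat\xi$ satisfy $b_s(\hat\xi, v) = \langle\hat{\mathscr{R}}, v\rangle$ for all $v \in \mathscr{H}^1_{\Gamma_D}(\Omega)$ with Galerkin orthogonality $\langle\hat{\mathscr{R}}, v_h\rangle = 0$ for all $v_h \in \mathscr{V}_h$, and let $\hat\gamma_{s,h}$ be the approximation factor defined via the adjoint solution operator $\mathscr{S}_s^\star$. Then $\{\hat\xi\}_{H^1_s(\Omega)} \le \hat\gamma_{s,h}\,\|\hat{\mathscr{R}}\|_{-1,\Omega}$, where $\{\phi\}_{H^1_s}^2 := |s|^2\|\phi\|_{\mu,\Omega}^2 + (|s|^2/\rho)\|\phi\|_{\gamma,\Gamma_A}^2$. -/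

import Mathlib

/- STATEMENT 4: Aubin–Nitsche bound `{ξ}_{H¹_s} ≤ γ̂_{s,h} ‖R̂‖_{-1,Ω}`.
`Sstar` is the adjoint solution operator, `curlySq φ = {φ}²_{H¹_s}`, and `γhat`
is any constant realizing the approximation-factor property: for each φ there is
a discrete `vh ∈ Vh` with `‖∇(S⋆φ - vh)‖_A ≤ γhat {φ}_{H¹_s}`. -/

open scoped ComplexInnerProductSpace

theorem stmt4
    {V Eμ Eγ Eg : Type*} [AddCommGroup V] [Module ℂ V]
    [NormedAddCommGroup Eμ] [InnerProductSpace ℂ Eμ]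
    [NormedAddCommGroup Eγ] [InnerProductSpace ℂ Eγ]
    [NormedAddCommGroup Eg] [InnerProductSpace ℂ Eg]
    (Mμ : V →ₗ[ℂ] Eμ) (Mγ : V →ₗ[ℂ] Eγ) (G : V →ₗ[ℂ] Eg)
    (s : ℂ) (ρ : ℝ) (hρ : ρ = s.re) (hρpos : 0 < ρ)
    (bs : V → V → ℂ)
    (hbs : ∀ v w, bs v w =
      s ^ 2 * ⟪Mμ w, Mμ v⟫ + s * ⟪Mγ w, Mγ v⟫ + ⟪G w, G v⟫)
    (curlySq : V → ℝ)
    (hcurly : ∀ φ, curlySq φ = ‖s‖ ^ 2 * ‖Mμ φ‖ ^ 2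
      + (‖s‖ ^ 2 / ρ) * ‖Mγ φ‖ ^ 2)
    (Vh : Submodule ℂ V)
    (Sstar : V → V)
    (hS : ∀ φ w : V, bs w (Sstar φ) =
      ((‖s‖ ^ 2 : ℝ) : ℂ) * ⟪Mμ φ, Mμ w⟫
        + ((‖s‖ ^ 2 / ρ : ℝ) : ℂ) * ⟪Mγ φ, Mγ w⟫)
    (γhat : ℝ) (hγhat : 0 ≤ γhat)
    (happrox : ∀ φ : V, ∃ vh ∈ Vh,
      ‖G (Sstar φ - vh)‖ ≤ γhat * Real.sqrt (curlySq φ))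
    (R : V → ℂ) (Rnorm : ℝ) (hRnorm : 0 ≤ Rnorm)
    (hbound : ∀ v : V, ‖R v‖ ≤ Rnorm * ‖G v‖)
    (hGal : ∀ vh ∈ Vh, R vh = 0)
    (ξ : V) (hξ : ∀ v : V, bs ξ v = R v) :
    Real.sqrt (curlySq ξ) ≤ γhat * Rnorm := by

  obtain ⟨vh, hvh, hGb⟩ := happrox ξ
  have h0 : bs ξ vh = 0 := by rw [hξ]; exact hGal vh hvh
  have hsub : bs ξ ((Sstar ξ) - vh) = bs ξ (Sstar ξ) - bs ξ vh := by
    simp only [hbs, map_sub, inner_sub_left]; ring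
  have hnonneg : 0 ≤ curlySq ξ := by
    rw [hcurly]; positivity
  have hμ : (⟪Mμ ξ, Mμ ξ⟫ : ℂ) = ((‖Mμ ξ‖ ^ 2 : ℝ) : ℂ) := by
    rw [inner_self_eq_norm_sq_to_K]; norm_cast
  have hγ2 : (⟪Mγ ξ, Mγ ξ⟫ : ℂ) = ((‖Mγ ξ‖ ^ 2 : ℝ) : ℂ) := by
    rw [inner_self_eq_norm_sq_to_K]; norm_cast
  have hmain : ((curlySq ξ : ℝ) : ℂ) = R ((Sstar ξ) - vh) := by
    rw [← hξ, hsub, h0, sub_zero, hS ξ ξ, hμ, hγ2, hcurly]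
    push_cast
    ring
  have habs : curlySq ξ ≤ Rnorm * (γhat * Real.sqrt (curlySq ξ)) := by
    calc curlySq ξ = ‖((curlySq ξ : ℝ) : ℂ)‖ := by
          rw [Complex.norm_real, Real.norm_eq_abs, abs_of_nonneg hnonneg]
      _ = ‖R ((Sstar ξ) - vh)‖ := by rw [hmain]
      _ ≤ Rnorm * ‖G ((Sstar ξ) - vh)‖ := hbound _
      _ ≤ Rnorm * (γhat * Real.sqrt (curlySq ξ)) := by
          exact mul_le_mul_of_nonneg_left hGb hRnorm
  have hsq := Real.sq_sqrt hnonneg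
  set t := Real.sqrt (curlySq ξ) with ht
  have htn : 0 ≤ t := Real.sqrt_nonneg _
  rcases eq_or_lt_of_le htn with h | h
  · rw [← h]; positivity
  · have : t * t ≤ (γhat * Rnorm) * t := by nlinarith [hsq]
    exact le_of_mul_le_mul_right (by nlinarith) h
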